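/- arXiv:1204.0549 — 4 statements merged into one kernel-verified Lean document; each statement's English description precedes it below -/
import Mathlib

section
/- Let (Ω, F, P) be a probability space, let G_1, ..., G_n be sub-σ-algebras of F, and let p_1, ..., p_n be random variables with values in [0,1] such that the σ-algebras σ(p_1) ∨ G_1, ..., σ(p_n) ∨ G_n are mutually independent. Let G = G_1 ∨ ⋯ ∨ G_n. Then E[∏_{i=1}^n p_i | G] = ∏_{i=1}^n E[p_i | G_i] almost surely. -/
open MeasureTheory ProbabilityTheory MeasurableSpace

private lemma iIndep_mono' {Ω ι : Type*} {mΩ : MeasurableSpace Ω} {μ : Measure Ω}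
    {m m' : ι → MeasurableSpace Ω} (h : iIndep m' μ) (hle : ∀ i, m i ≤ m' i) :
    iIndep m μ := by
  rw [iIndep_iff] at h ⊢
  intro s f hf
  exact h s fun i hi => hle i _ (hf i hi)

private lemma integral_prod_of_indep' {Ω ι : Type*} [mΩ : MeasurableSpace Ω] {μ : Measure Ω}
    [IsProbabilityMeasure μ] {f : ι → Ω → ℝ}
    (hmeas : ∀ i, Measurable (f i)) (hbdd : ∀ i, ∀ᵐ ω ∂μ, |f i ω| ≤ 1)
    (hindep : iIndepFun f μ)
    (s : Finset ι) :
    ∫ ω, ∏ i ∈ s, f i ω ∂μ = ∏ i ∈ s, ∫ ω, f i ω ∂μ := by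
  classical
  have hint : ∀ (t : Finset ι), Integrable (fun ω => ∏ i ∈ t, f i ω) μ := by
    intro t
    refine Integrable.mono' (integrable_const 1)
      (Measurable.aestronglyMeasurable (by exact Finset.measurable_prod t fun i _ => hmeas i)) ?_
    have h := (ae_ball_iff t.countable_toSet).2 fun i _ => hbdd i
    filter_upwards [h] with ω hω
    rw [Real.norm_eq_abs, Finset.abs_prod]
    exact Finset.prod_le_one (fun i _ => abs_nonneg _) fun i hi => hω i hi
  induction s using Finset.induction with
  | empty => simp
  | @insert a s ha ih =>
    have hIndep : IndepFun (∏ j ∈ s, f j) (f a) μ :=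
      hindep.indepFun_finsetProd_of_notMem hmeas ha
    have h1 : Integrable (∏ j ∈ s, f j) μ := by
      have := hint s
      simpa [Finset.prod_fn] using this
    have h2 := hIndep.integral_mul_eq_mul_integral h1.aestronglyMeasurable (Integrable.mono' (integrable_const 1)
      (hmeas a).aestronglyMeasurable (by filter_upwards [hbdd a] with ω h; simpa using h)).aestronglyMeasurable
    simp only [Finset.prod_insert ha]
    have hfun : (fun ω => f a ω * ∏ i ∈ s, f i ω) = (∏ j ∈ s, f j) * f a := by
      funext ω
      simp [Finset.prod_apply, mul_comm]
    calc ∫ ω, f a ω * ∏ i ∈ s, f i ω ∂μ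
        = ∫ ω, ((∏ j ∈ s, f j) * f a) ω ∂μ := by rw [hfun]
      _ = (∫ ω, (∏ j ∈ s, f j) ω ∂μ) * ∫ ω, f a ω ∂μ := h2
      _ = (∫ ω, f a ω ∂μ) * ∏ i ∈ s, ∫ ω, f i ω ∂μ := by
          rw [mul_comm]
          congr 1
          rw [← ih]
          simp [Finset.prod_apply]

/-- Factorization of the conditional expectation of a product: if the σ-algebras
`σ(p i) ⊔ G i` are mutually independent, then
`E[∏ p i | ⨆ G i] = ∏ E[p i | G i]` almost surely. -/
theorem condexp_prod_factorization {Ω : Type*} {mΩ : MeasurableSpace Ω} (P : Measure Ω)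
    [IsProbabilityMeasure P] (n : ℕ) (G : Fin n → MeasurableSpace Ω)
    (hG : ∀ i, G i ≤ mΩ) (p : Fin n → Ω → ℝ)
    (hmeas : ∀ i, Measurable (p i))
    (hrange : ∀ i, ∀ ω, p i ω ∈ Set.Icc (0 : ℝ) 1)
    (hindep : iIndep (fun i => MeasurableSpace.comap (p i) inferInstance ⊔ G i) P) :
    P[(fun ω => ∏ i, p i ω) | ⨆ i, G i] =ᵐ[P] fun ω => ∏ i, (P[p i | G i]) ω := by
  classical
  have hm : (⨆ i, G i) ≤ mΩ := iSup_le hG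
  set E : Fin n → Ω → ℝ := fun i => P[p i | G i] with hE_def
  set f : Ω → ℝ := fun ω => ∏ i, p i ω with hf_def
  set g : Ω → ℝ := fun ω => ∏ i, E i ω with hg_def
  -- basic facts
  have hp_int : ∀ i, Integrable (p i) P := by
    intro i
    refine Integrable.mono' (integrable_const 1) (hmeas i).aestronglyMeasurable ?_
    exact ae_of_all _ fun ω => by
      rw [Real.norm_eq_abs, abs_of_nonneg (hrange i ω).1]; exact (hrange i ω).2
  have hE_sm : ∀ i, StronglyMeasurable[G i] (E i) := fun i => stronglyMeasurable_condExp
  have hE_meas : ∀ i, Measurable[mΩ] (E i) := fun i =>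
    ((hE_sm i).measurable).mono (hG i) le_rfl
  have hE01 : ∀ i, ∀ᵐ ω ∂P, E i ω ∈ Set.Icc (0 : ℝ) 1 := by
    intro i
    have h0 : (0 : Ω → ℝ) ≤ᵐ[P] E i :=
      condExp_nonneg (ae_of_all _ fun ω => (hrange i ω).1)
    have h1 : E i ≤ᵐ[P] P[(fun _ => (1 : ℝ)) | G i] :=
      condExp_mono (hp_int i) (integrable_const 1) (ae_of_all _ fun ω => (hrange i ω).2)
    have hc : P[(fun _ => (1 : ℝ)) | G i] = fun _ => (1 : ℝ) := condExp_const (hG i) 1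
    filter_upwards [h0, h1] with ω hω0 hω1
    exact ⟨hω0, by rw [hc] at hω1; exact hω1⟩
  have hf_meas : Measurable f := by
    have := Finset.measurable_prod (f := p) Finset.univ fun i _ => hmeas i
    simpa [hf_def, Finset.prod_apply] using this
  have hf_int : Integrable f P := by
    refine Integrable.mono' (integrable_const 1) hf_meas.aestronglyMeasurable ?_
    refine ae_of_all _ fun ω => ?_
    rw [Real.norm_eq_abs, Finset.abs_prod]
    exact Finset.prod_le_one (fun i _ => abs_nonneg _)
      (fun i _ => by rw [abs_of_nonneg (hrange i ω).1]; exact (hrange i ω).2)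
  have hg_sm : StronglyMeasurable[⨆ i, G i] g := by
    have hmg : Measurable[⨆ i, G i] g := by
      have : ∀ i, Measurable[⨆ i, G i] (E i) := fun i =>
        ((hE_sm i).measurable).mono (le_iSup G i) le_rfl
      have := Finset.measurable_prod (f := E) Finset.univ fun i _ => this i
      simpa [hg_def, Finset.prod_apply] using this
    exact hmg.stronglyMeasurable
  have hg_bdd : ∀ᵐ ω ∂P, |g ω| ≤ 1 := by
    have h := ae_all_iff.2 hE01
    filter_upwards [h] with ω hω
    rw [Finset.abs_prod]
    exact Finset.prod_le_one (fun i _ => abs_nonneg _)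
      (fun i _ => by rw [abs_of_nonneg (hω i).1]; exact (hω i).2)
  have hg_int : Integrable g P := by
    refine Integrable.mono' (integrable_const 1)
      ((hg_sm.mono hm).measurable.aestronglyMeasurable) ?_
    filter_upwards [hg_bdd] with ω h; simpa using h
  -- key set-integral equality, via the π-system of intersections
  have key : ∀ t : Set Ω, MeasurableSet[⨆ i, G i] t → ∫ ω in t, g ω ∂P = ∫ ω in t, f ω ∂P := by
    have hgen : (⨆ i, G i) = MeasurableSpace.generateFrom
        (piiUnionInter (fun i => {s | MeasurableSet[G i] s}) Set.univ) := by
      have h1 := generateFrom_piiUnionInter_measurableSet G Set.univ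
      simp only [iSup_univ] at h1
      exact h1.symm
    have hpi : IsPiSystem (piiUnionInter (fun i => {s | MeasurableSet[G i] s}) Set.univ) :=
      isPiSystem_piiUnionInter _ (fun i => @MeasurableSpace.isPiSystem_measurableSet Ω (G i)) _
    intro t ht
    refine MeasurableSpace.induction_on_inter (m := ⨆ i, G i)
      (C := fun t _ => ∫ ω in t, g ω ∂P = ∫ ω in t, f ω ∂P) hgen hpi ?_ ?_ ?_ ?_ t ht
    · simp
    · -- basic: t = ⋂ x ∈ T, sets x
      rintro u ⟨T, -, sets, hsets, rfl⟩
      set s' : Fin n → Set Ω := fun i => if i ∈ T then sets i else Set.univ with hs'_def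
      have h's : ∀ i, MeasurableSet[G i] (s' i) := by
        intro i
        by_cases hi : i ∈ T
        · simpa [hs'_def, hi] using hsets i hi
        · simp [hs'_def, hi]
      have ht_eq : (⋂ x ∈ T, sets x) = ⋂ i, s' i := by
        ext ω
        simp only [Set.mem_iInter, hs'_def]
        constructor
        · intro h i
          by_cases hi : i ∈ T
          · simpa [hi] using h i hi
          · simp [hi]
        · intro h i hi
          have := h i
          simpa [hi] using this
      have ht_meas : MeasurableSet[mΩ] (⋂ i, s' i) :=
        MeasurableSet.iInter fun i => hG i _ (h's i)
      set ind : Fin n → Ω → ℝ := fun i => (s' i).indicator (fun _ => (1:ℝ)) with hind_def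
      have hind_meas : ∀ i, Measurable[G i] (ind i) := fun i =>
        measurable_const.indicator (h's i)
      have hind_prod : ∀ ω, ∏ i, ind i ω = (⋂ i, s' i).indicator (fun _ => (1:ℝ)) ω := by
        intro ω
        by_cases h : ω ∈ ⋂ i, s' i
        · rw [Set.indicator_of_mem h]
          rw [Set.mem_iInter] at h
          exact Finset.prod_eq_one fun i _ => by
            simp [hind_def, Set.indicator_of_mem (h i)]
        · rw [Set.indicator_of_notMem h]
          rw [Set.mem_iInter] at h
          push_neg at h
          obtain ⟨i, hi⟩ := h
          exact Finset.prod_eq_zero (Finset.mem_univ i)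
            (by simp [hind_def, Set.indicator_of_notMem hi])
      set q : Fin n → Ω → ℝ := fun i ω => p i ω * ind i ω with hq_def
      set r : Fin n → Ω → ℝ := fun i ω => E i ω * ind i ω with hr_def
      have hq_meas' : ∀ i, Measurable[MeasurableSpace.comap (p i) inferInstance ⊔ G i] (q i) := by
        intro i
        refine Measurable.mul ?_ ((hind_meas i).mono le_sup_right le_rfl)
        exact Measurable.mono (measurable_iff_comap_le.mpr le_rfl) le_sup_left le_rfl
      have hr_meas' : ∀ i, Measurable[MeasurableSpace.comap (p i) inferInstance ⊔ G i] (r i) := by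
        intro i
        refine Measurable.mul ?_ ((hind_meas i).mono le_sup_right le_rfl)
        exact ((hE_sm i).measurable).mono le_sup_right le_rfl
      have hq_meas : ∀ i, Measurable[mΩ] (q i) := fun i =>
        (hq_meas' i).mono (sup_le (measurable_iff_comap_le.mp (hmeas i)) (hG i)) le_rfl
      have hr_meas : ∀ i, Measurable[mΩ] (r i) := fun i =>
        (hr_meas' i).mono (sup_le (measurable_iff_comap_le.mp (hmeas i)) (hG i)) le_rfl
      have hq_indep : iIndepFun q P := by
        rw [iIndepFun_iff_iIndep]
        exact iIndep_mono' hindep fun i => measurable_iff_comap_le.mp (hq_meas' i)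
      have hr_indep : iIndepFun r P := by
        rw [iIndepFun_iff_iIndep]
        exact iIndep_mono' hindep fun i => measurable_iff_comap_le.mp (hr_meas' i)
      have hind01 : ∀ i ω, ind i ω = 0 ∨ ind i ω = 1 := by
        intro i ω
        by_cases h : ω ∈ s' i
        · right; simp [hind_def, Set.indicator_of_mem h]
        · left; simp [hind_def, Set.indicator_of_notMem h]
      have hq_bdd : ∀ i, ∀ᵐ ω ∂P, |q i ω| ≤ 1 := by
        intro i
        refine ae_of_all _ fun ω => ?_
        rcases hind01 i ω with h | h <;>
          simp [hq_def, h, abs_of_nonneg (hrange i ω).1, (hrange i ω).2]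
      have hr_bdd : ∀ i, ∀ᵐ ω ∂P, |r i ω| ≤ 1 := by
        intro i
        filter_upwards [hE01 i] with ω hω
        rcases hind01 i ω with h | h <;>
          simp [hr_def, h, abs_of_nonneg hω.1, hω.2]
      have hmul_ind : ∀ (h : Ω → ℝ) i ω, h ω * ind i ω = (s' i).indicator h ω := by
        intro h i ω
        by_cases hω : ω ∈ s' i <;> simp [hind_def, hω]
      have hq_eq : ∀ i, ∫ ω, q i ω ∂P = ∫ ω in s' i, p i ω ∂P := by
        intro i
        rw [← integral_indicator (hG i _ (h's i))]
        exact integral_congr_ae (ae_of_all _ fun ω => hmul_ind (p i) i ω)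
      have hr_eq : ∀ i, ∫ ω, r i ω ∂P = ∫ ω in s' i, E i ω ∂P := by
        intro i
        rw [← integral_indicator (hG i _ (h's i))]
        exact integral_congr_ae (ae_of_all _ fun ω => hmul_ind (E i) i ω)
      have hse : ∀ i, ∫ ω in s' i, E i ω ∂P = ∫ ω in s' i, p i ω ∂P := fun i =>
        setIntegral_condExp (hG i) (hp_int i) (h's i)
      have hprod_g : ∀ ω, Set.indicator (⋂ i, s' i) g ω = ∏ i, r i ω := by
        intro ω
        simp only [hr_def]
        rw [Finset.prod_mul_distrib, hind_prod ω]
        by_cases h : ω ∈ ⋂ i, s' i <;>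
          simp [Set.indicator_of_mem, Set.indicator_of_notMem, h, hg_def]
      have hprod_f : ∀ ω, Set.indicator (⋂ i, s' i) f ω = ∏ i, q i ω := by
        intro ω
        simp only [hq_def]
        rw [Finset.prod_mul_distrib, hind_prod ω]
        by_cases h : ω ∈ ⋂ i, s' i <;>
          simp [Set.indicator_of_mem, Set.indicator_of_notMem, h, hf_def]
      rw [ht_eq]
      calc ∫ ω in ⋂ i, s' i, g ω ∂P
          = ∫ ω, ∏ i, r i ω ∂P := by
            rw [← integral_indicator ht_meas]
            exact integral_congr_ae (ae_of_all _ hprod_g)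
        _ = ∏ i, ∫ ω, r i ω ∂P :=
            integral_prod_of_indep' hr_meas hr_bdd hr_indep Finset.univ
        _ = ∏ i, ∫ ω, q i ω ∂P := by
            refine Finset.prod_congr rfl fun i _ => ?_
            rw [hr_eq i, hse i, hq_eq i]
        _ = ∫ ω, ∏ i, q i ω ∂P :=
            (integral_prod_of_indep' hq_meas hq_bdd hq_indep Finset.univ).symm
        _ = ∫ ω in ⋂ i, s' i, f ω ∂P := by
            rw [← integral_indicator ht_meas]
            exact integral_congr_ae (ae_of_all _ fun ω => (hprod_f ω).symm)
    · -- compl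
      intro u hu hC
      have hu' : MeasurableSet[mΩ] u := hm _ hu
      have huniv : ∫ ω, g ω ∂P = ∫ ω, f ω ∂P := by
        have hp_indep : iIndepFun p P := by
          rw [iIndepFun_iff_iIndep]
          exact iIndep_mono' hindep fun i => le_sup_left
        have hE_indep : iIndepFun E P := by
          rw [iIndepFun_iff_iIndep]
          refine iIndep_mono' hindep fun i => ?_
          exact le_trans (measurable_iff_comap_le.mp (hE_sm i).measurable) le_sup_right
        have hp_bdd : ∀ i, ∀ᵐ ω ∂P, |p i ω| ≤ 1 := fun i =>
          ae_of_all _ fun ω => by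
            rw [abs_of_nonneg (hrange i ω).1]; exact (hrange i ω).2
        have hE_bdd : ∀ i, ∀ᵐ ω ∂P, |E i ω| ≤ 1 := fun i => by
          filter_upwards [hE01 i] with ω hω
          rw [abs_of_nonneg hω.1]; exact hω.2
        calc ∫ ω, g ω ∂P
            = ∏ i, ∫ ω, E i ω ∂P :=
              integral_prod_of_indep' hE_meas hE_bdd hE_indep Finset.univ
          _ = ∏ i, ∫ ω, p i ω ∂P := by
              refine Finset.prod_congr rfl fun i _ => ?_
              exact integral_condExp (hG i)
          _ = ∫ ω, f ω ∂P :=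
              (integral_prod_of_indep' hmeas hp_bdd hp_indep Finset.univ).symm
      have h1 := integral_add_compl hu' hg_int
      have h2 := integral_add_compl hu' hf_int
      have : ∫ ω in u, g ω ∂P + ∫ ω in uᶜ, g ω ∂P
          = ∫ ω in u, f ω ∂P + ∫ ω in uᶜ, f ω ∂P := by rw [h1, h2, huniv]
      linarith [hC]
    · -- disjoint union
      intro u hdisj humeas hC
      have humeas' : ∀ k, MeasurableSet[mΩ] (u k) := fun k => hm _ (humeas k)
      rw [integral_iUnion humeas' hdisj hg_int.integrableOn,
        integral_iUnion humeas' hdisj hf_int.integrableOn]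
      exact tsum_congr hC
  refine (ae_eq_condExp_of_forall_setIntegral_eq hm hf_int
    (fun s _ _ => hg_int.integrableOn) (fun s hs _ => key s hs)
    (hg_sm.aestronglyMeasurable)).symm
end

section
/- Let (Ω, F, P) be a probability space, let G_1, ..., G_n be sub-σ-algebras of F, and let p_1, ..., p_n be random variables with values in [0,1] such that the σ-algebras σ(p_1) ∨ G_1, ..., σ(p_n) ∨ G_n are mutually independent. Let G = G_1 ∨ ⋯ ∨ G_n. Then E[Var(∏_{i=1}^n p_i | G)] = ∏_{i=1}^n E[p_i²] − ∏_{i=1}^n (E[p_i²] − E[Var(p_i | G_i)]). -/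
open MeasureTheory ProbabilityTheory

section Aux
set_option linter.unusedSectionVars false
variable {Ω : Type*} {mΩ : MeasurableSpace Ω} {P : Measure Ω} [IsProbabilityMeasure P]

lemma my_integrable_of_bound {f : Ω → ℝ} (hf : AEStronglyMeasurable f P)
    (h : ∀ ω, |f ω| ≤ 1) : Integrable f P :=
  (integrable_const (1:ℝ)).mono' hf (Filter.Eventually.of_forall fun ω => by
    simpa using h ω)

lemma my_indepFun {m₁ m₂ : MeasurableSpace Ω} {f g : Ω → ℝ}
    (h : Indep m₁ m₂ P) (hf : Measurable[m₁] f) (hg : Measurable[m₂] g) :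
    IndepFun f g P :=
  indep_of_indep_of_le_right (indep_of_indep_of_le_left h (measurable_iff_comap_le.mp hf))
    (measurable_iff_comap_le.mp hg)

lemma my_integral_prod {n : ℕ} {Q : Fin n → MeasurableSpace Ω} (hQ : ∀ i, Q i ≤ mΩ)
    (hind : iIndep Q P) (f : Fin n → Ω → ℝ) (hfm : ∀ i, Measurable[Q i] (f i))
    (hf0 : ∀ i ω, 0 ≤ f i ω) (s : Finset (Fin n)) :
    ∫ ω, ∏ i ∈ s, f i ω ∂P = ∏ i ∈ s, ∫ ω, f i ω ∂P := by
  classical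
  induction s using Finset.induction_on with
  | empty => simp
  | @insert i s hi ih =>
    have hmi : Measurable (f i) := (hfm i).mono (hQ i) le_rfl
    have hprod_meas : Measurable fun ω => ∏ j ∈ s, f j ω :=
      (Finset.measurable_prod (M := ℝ) (f := f) s fun j hj =>
        ((hfm j).mono (hQ j) le_rfl))
    have hIndep : IndepFun (f i) (fun ω => ∏ j ∈ s, f j ω) P := by
      refine my_indepFun (m₁ := Q i) (m₂ := ⨆ j ∈ (↑s : Set (Fin n)), Q j) ?_ (hfm i) ?_
      · have h := indep_biSup_compl hQ hind {i}
        refine indep_of_indep_of_le_right (indep_of_indep_of_le_left h ?_) ?_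
        · exact le_of_eq (by simp)
        · refine biSup_mono fun j hj => ?_
          simp only [Set.mem_compl_iff, Set.mem_singleton_iff]
          exact fun hji => hi (hji ▸ hj)
      · exact Finset.measurable_prod (M := ℝ) s fun j hj =>
          ((hfm j).mono (le_iSup₂ (f := fun j (_ : j ∈ (↑s : Set (Fin n))) => Q j) j hj) le_rfl)
    have key := hIndep.integral_mul_eq_mul_integral
      hmi.aestronglyMeasurable hprod_meas.aestronglyMeasurable
    simp_rw [Finset.prod_insert hi]
    calc ∫ ω, f i ω * ∏ j ∈ s, f j ω ∂P
        = ∫ ω, ((f i) * fun ω' => ∏ j ∈ s, f j ω') ω ∂P := rfl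
      _ = (∫ ω, f i ω ∂P) * ∫ ω, ∏ j ∈ s, f j ω ∂P := key
      _ = (∫ ω, f i ω ∂P) * ∏ j ∈ s, ∫ ω, f j ω ∂P := by rw [ih]

lemma my_condExp_prod {n : ℕ} (G : Fin n → MeasurableSpace Ω) (hG : ∀ i, G i ≤ mΩ)
    (p : Fin n → Ω → ℝ) (hmeas : ∀ i, Measurable (p i))
    (hrange : ∀ i, ∀ ω, p i ω ∈ Set.Icc (0 : ℝ) 1)
    (hindep : iIndep (fun i => MeasurableSpace.comap (p i) inferInstance ⊔ G i) P)
    (g : Fin n → Ω → ℝ) (hgm : ∀ i, Measurable[G i] (g i))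
    (hg0 : ∀ i ω, 0 ≤ g i ω) (hg1 : ∀ i ω, g i ω ≤ 1)
    (hgae : ∀ i, g i =ᵐ[P] P[p i | G i]) :
    (fun ω => ∏ i, g i ω) =ᵐ[P] P[(fun ω => ∏ i, p i ω) | ⨆ i, G i] := by
  classical
  have hm : (⨆ i, G i : MeasurableSpace Ω) ≤ mΩ := iSup_le hG
  set Q : Fin n → MeasurableSpace Ω :=
    fun i => MeasurableSpace.comap (p i) inferInstance ⊔ G i with hQ_def
  have hQ : ∀ i, Q i ≤ mΩ := fun i =>
    sup_le (measurable_iff_comap_le.mp (hmeas i)) (hG i)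
  have hpQ : ∀ i, Measurable[Q i] (p i) := fun i =>
    measurable_iff_comap_le.mpr le_sup_left
  set F : Ω → ℝ := fun ω => ∏ i, p i ω with hF_def
  set gg : Ω → ℝ := fun ω => ∏ i, g i ω with hgg_def
  have hFmeas : Measurable[mΩ] F := Finset.measurable_prod _ fun i _ => hmeas i
  have hF0 : ∀ ω, 0 ≤ F ω := fun ω => Finset.prod_nonneg fun i _ => (hrange i ω).1
  have hF1 : ∀ ω, F ω ≤ 1 := fun ω =>
    Finset.prod_le_one (fun i _ => (hrange i ω).1) (fun i _ => (hrange i ω).2)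
  have hgg_meas : Measurable[⨆ i, G i] gg :=
    Finset.measurable_prod _ fun i _ => (hgm i).mono (le_iSup G i) le_rfl
  have hgg0 : ∀ ω, 0 ≤ gg ω := fun ω => Finset.prod_nonneg fun i _ => hg0 i ω
  have hgg1 : ∀ ω, gg ω ≤ 1 := fun ω =>
    Finset.prod_le_one (fun i _ => hg0 i ω) (fun i _ => hg1 i ω)
  have hFint : Integrable F P := my_integrable_of_bound hFmeas.aestronglyMeasurable
    (fun ω => abs_le.mpr ⟨by linarith [hF0 ω], hF1 ω⟩)
  have hggint : Integrable gg P :=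
    my_integrable_of_bound ((hgg_meas.mono hm le_rfl).aestronglyMeasurable)
      (fun ω => abs_le.mpr ⟨by linarith [hgg0 ω], hgg1 ω⟩)
  -- the key set-integral equality on the generating π-system
  have hsetint : ∀ (A : Fin n → Set Ω), (∀ i, MeasurableSet[G i] (A i)) →
      ∫ ω in ⋂ i, A i, gg ω ∂P = ∫ ω in ⋂ i, A i, F ω ∂P := by
    intro A hA
    have hAmΩ : ∀ i, MeasurableSet[mΩ] (A i) := fun i => hG i _ (hA i)
    have hs_meas : MeasurableSet[mΩ] (⋂ i, A i) := MeasurableSet.iInter hAmΩ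
    set u : Fin n → Ω → ℝ := fun i ω => p i ω * (A i).indicator (fun _ => (1:ℝ)) ω with hu
    set v : Fin n → Ω → ℝ := fun i ω => g i ω * (A i).indicator (fun _ => (1:ℝ)) ω with hv
    have hind_meas : ∀ i, Measurable[Q i] fun ω => (A i).indicator (fun _ => (1:ℝ)) ω :=
      fun i => by
        have hle : G i ≤ Q i := le_sup_right
        have hAQ : MeasurableSet[Q i] (A i) := hle _ (hA i)
        exact measurable_const.indicator hAQ
    have hum : ∀ i, Measurable[Q i] (u i) := fun i => (hpQ i).mul (hind_meas i)
    have hvm : ∀ i, Measurable[Q i] (v i) := fun i =>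
      ((hgm i).mono le_sup_right le_rfl).mul (hind_meas i)
    have hu0 : ∀ i ω, 0 ≤ u i ω := fun i ω =>
      mul_nonneg ((hrange i ω).1) (Set.indicator_nonneg (fun _ _ => zero_le_one) ω)
    have hv0 : ∀ i ω, 0 ≤ v i ω := fun i ω =>
      mul_nonneg (hg0 i ω) (Set.indicator_nonneg (fun _ _ => zero_le_one) ω)
    -- pointwise identities
    have hprod_ind : ∀ (f : Fin n → Ω → ℝ) ω,
        (∏ i, f i ω * (A i).indicator (fun _ => (1:ℝ)) ω)
          = (⋂ i, A i).indicator (fun ω' => ∏ i, f i ω') ω := by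
      intro f ω
      by_cases hω : ω ∈ ⋂ i, A i
      · have : ∀ i, ω ∈ A i := by simpa [Set.mem_iInter] using hω
        simp [Set.indicator_of_mem, hω, this]
      · obtain ⟨i, hi⟩ : ∃ i, ω ∉ A i := by
          by_contra h; push_neg at h; exact hω (Set.mem_iInter.mpr h)
        rw [Set.indicator_of_notMem hω]
        exact Finset.prod_eq_zero (Finset.mem_univ i) (by simp [Set.indicator_of_notMem hi])
    have hfactor : ∀ i, ∫ ω, u i ω ∂P = ∫ ω, v i ω ∂P := by
      intro i
      have hu_eq : ∀ ω, u i ω = (A i).indicator (p i) ω := by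
        intro ω; by_cases hω : ω ∈ A i <;>
          simp [hu, Set.indicator_of_mem, Set.indicator_of_notMem, hω]
      have hv_eq : ∀ ω, v i ω = (A i).indicator (g i) ω := by
        intro ω; by_cases hω : ω ∈ A i <;>
          simp [hv, Set.indicator_of_mem, Set.indicator_of_notMem, hω]
      have hpint : Integrable (p i) P := my_integrable_of_bound (hmeas i).aestronglyMeasurable
        (fun ω => abs_le.mpr ⟨by linarith [(hrange i ω).1], (hrange i ω).2⟩)
      calc ∫ ω, u i ω ∂P = ∫ ω, (A i).indicator (p i) ω ∂P := by simp_rw [hu_eq]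
        _ = ∫ ω in A i, p i ω ∂P := integral_indicator (hAmΩ i)
        _ = ∫ ω in A i, (P[p i | G i]) ω ∂P := (setIntegral_condExp (hG i) hpint (hA i)).symm
        _ = ∫ ω in A i, g i ω ∂P := integral_congr_ae (ae_restrict_of_ae (hgae i).symm)
        _ = ∫ ω, (A i).indicator (g i) ω ∂P := (integral_indicator (hAmΩ i)).symm
        _ = ∫ ω, v i ω ∂P := by simp_rw [hv_eq]
    calc ∫ ω in ⋂ i, A i, gg ω ∂P
        = ∫ ω, (⋂ i, A i).indicator gg ω ∂P := (integral_indicator hs_meas).symm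
      _ = ∫ ω, ∏ i, v i ω ∂P := by
          refine integral_congr_ae (Filter.Eventually.of_forall fun ω => ?_)
          simpa [hv] using (hprod_ind g ω).symm
      _ = ∏ i, ∫ ω, v i ω ∂P := my_integral_prod hQ hindep v hvm hv0 Finset.univ
      _ = ∏ i, ∫ ω, u i ω ∂P := by simp_rw [hfactor]
      _ = ∫ ω, ∏ i, u i ω ∂P := (my_integral_prod hQ hindep u hum hu0 Finset.univ).symm
      _ = ∫ ω, (⋂ i, A i).indicator F ω ∂P := by
          refine integral_congr_ae (Filter.Eventually.of_forall fun ω => ?_)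
          simpa [hu] using hprod_ind p ω
      _ = ∫ ω in ⋂ i, A i, F ω ∂P := integral_indicator hs_meas
  -- extend to all m-measurable sets via measure uniqueness
  set ν₁ : Measure Ω := P.withDensity (fun ω => ENNReal.ofReal (F ω)) with hν₁
  set ν₂ : Measure Ω := P.withDensity (fun ω => ENNReal.ofReal (gg ω)) with hν₂
  have hfin₁ : IsFiniteMeasure ν₁ := by
    refine isFiniteMeasure_withDensity (ne_of_lt ?_)
    calc ∫⁻ ω, ENNReal.ofReal (F ω) ∂P ≤ ∫⁻ _, 1 ∂P :=
          lintegral_mono fun ω => by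
            simpa using ENNReal.ofReal_le_ofReal (hF1 ω)
      _ < ⊤ := by simp
  have hfin₂ : IsFiniteMeasure ν₂ := by
    refine isFiniteMeasure_withDensity (ne_of_lt ?_)
    calc ∫⁻ ω, ENNReal.ofReal (gg ω) ∂P ≤ ∫⁻ _, 1 ∂P :=
          lintegral_mono fun ω => by
            simpa using ENNReal.ofReal_le_ofReal (hgg1 ω)
      _ < ⊤ := by simp
  have hν₁_apply : ∀ s : Set Ω, MeasurableSet[mΩ] s →
      ν₁ s = ENNReal.ofReal (∫ ω in s, F ω ∂P) := by
    intro s hs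
    rw [hν₁, withDensity_apply _ hs,
      ofReal_integral_eq_lintegral_ofReal hFint.integrableOn
        (ae_restrict_of_ae (Filter.Eventually.of_forall hF0))]
  have hν₂_apply : ∀ s : Set Ω, MeasurableSet[mΩ] s →
      ν₂ s = ENNReal.ofReal (∫ ω in s, gg ω ∂P) := by
    intro s hs
    rw [hν₂, withDensity_apply _ hs,
      ofReal_integral_eq_lintegral_ofReal hggint.integrableOn
        (ae_restrict_of_ae (Filter.Eventually.of_forall hgg0))]
  have htrim_eq : ν₁.trim hm = ν₂.trim hm := by
    haveI := hfin₁; haveI := hfin₂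
    refine ext_of_generate_finite
      (piiUnionInter (fun i => { s | MeasurableSet[G i] s }) Set.univ) ?_ ?_ ?_ ?_
    · rw [generateFrom_piiUnionInter_measurableSet G Set.univ]
      exact (iSup_univ (f := G)).symm
    · exact isPiSystem_piiUnionInter _ (fun i => (G i).isPiSystem_measurableSet) _
    · rintro s ⟨t, -, A, hA, rfl⟩
      set A' : Fin n → Set Ω := fun i => if i ∈ t then A i else Set.univ with hA'
      have hA'meas : ∀ i, MeasurableSet[G i] (A' i) := by
        intro i
        by_cases hit : i ∈ t <;> simp [hA', hit, hA i, MeasurableSet.univ]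
        · exact hA i hit
      have hset_eq : (⋂ x ∈ t, A x) = ⋂ i, A' i := by
        ext ω
        simp only [Set.mem_iInter, hA']
        constructor
        · intro h i; by_cases hit : i ∈ t <;> simp [hit, h i]
        · intro h i hit; have := h i; rwa [if_pos hit] at this
      have hs_m : MeasurableSet[⨆ i, G i] (⋂ x ∈ t, A x) := by
        rw [hset_eq]
        exact MeasurableSet.iInter fun i => (le_iSup G i) _ (hA'meas i)
      have hs_mΩ : MeasurableSet[mΩ] (⋂ x ∈ t, A x) := hm _ hs_m
      rw [trim_measurableSet_eq hm hs_m, trim_measurableSet_eq hm hs_m,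
        hν₁_apply _ hs_mΩ, hν₂_apply _ hs_mΩ, hset_eq]
      rw [hsetint A' hA'meas]
    · rw [trim_measurableSet_eq hm MeasurableSet.univ,
        trim_measurableSet_eq hm MeasurableSet.univ,
        hν₁_apply _ MeasurableSet.univ, hν₂_apply _ MeasurableSet.univ]
      have h := hsetint (fun _ => Set.univ) (fun _ => MeasurableSet.univ)
      simp only [Set.iInter_univ] at h
      rw [h]
  have h_eq : ∀ s : Set Ω, MeasurableSet[⨆ i, G i] s → P s < ⊤ →
      ∫ ω in s, gg ω ∂P = ∫ ω in s, F ω ∂P := by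
    intro s hs _
    have h1 : ν₁ s = ν₂ s := by
      rw [← trim_measurableSet_eq hm hs, ← trim_measurableSet_eq hm hs, htrim_eq]
    rw [hν₁_apply _ (hm _ hs), hν₂_apply _ (hm _ hs)] at h1
    have hF_nonneg : 0 ≤ ∫ ω in s, F ω ∂P :=
      setIntegral_nonneg (hm _ hs) fun ω _ => hF0 ω
    have hg_nonneg : 0 ≤ ∫ ω in s, gg ω ∂P :=
      setIntegral_nonneg (hm _ hs) fun ω _ => hgg0 ω
    exact ((ENNReal.ofReal_eq_ofReal_iff hF_nonneg hg_nonneg).mp h1).symm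
  exact ae_eq_condExp_of_forall_setIntegral_eq hm hFint
    (fun s _ _ => hggint.integrableOn) h_eq
    (hgg_meas.stronglyMeasurable.aestronglyMeasurable)

end Aux

/-- Bayes-risk decomposition for a product of `[0,1]`-valued random variables: if the
σ-algebras `σ(p i) ⊔ G i` are mutually independent and `G = ⨆ G i`, then
`E[Var(∏ p i | G)] = ∏ E[p i²] − ∏ (E[p i²] − E[Var(p i | G i)])`,
where `Var(X | 𝒢) = E[X² | 𝒢] − (E[X | 𝒢])²`. -/
theorem bayes_risk_decomposition {Ω : Type*} {mΩ : MeasurableSpace Ω} (P : Measure Ω)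
    [IsProbabilityMeasure P] (n : ℕ) (G : Fin n → MeasurableSpace Ω)
    (hG : ∀ i, G i ≤ mΩ) (p : Fin n → Ω → ℝ)
    (hmeas : ∀ i, Measurable (p i))
    (hrange : ∀ i, ∀ ω, p i ω ∈ Set.Icc (0 : ℝ) 1)
    (hindep : iIndep (fun i => MeasurableSpace.comap (p i) inferInstance ⊔ G i) P) :
    ∫ ω, ((P[(fun ω' => (∏ i, p i ω') ^ 2) | ⨆ i, G i]) ω
        - ((P[(fun ω' => ∏ i, p i ω') | ⨆ i, G i]) ω) ^ 2) ∂P =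
      (∏ i, ∫ ω, (p i ω) ^ 2 ∂P) -
        ∏ i, ((∫ ω, (p i ω) ^ 2 ∂P) -
          ∫ ω, ((P[(fun ω' => (p i ω') ^ 2) | G i]) ω - ((P[p i | G i]) ω) ^ 2) ∂P) := by
  classical
  have hm : (⨆ i, G i : MeasurableSpace Ω) ≤ mΩ := iSup_le hG
  set Q : Fin n → MeasurableSpace Ω :=
    fun i => MeasurableSpace.comap (p i) inferInstance ⊔ G i with hQ_def
  have hQ : ∀ i, Q i ≤ mΩ := fun i =>
    sup_le (measurable_iff_comap_le.mp (hmeas i)) (hG i)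
  have hpQ : ∀ i, Measurable[Q i] (p i) := fun i => measurable_iff_comap_le.mpr le_sup_left
  -- the truncated conditional expectations
  set g : Fin n → Ω → ℝ := fun i ω => max 0 (min ((P[p i | G i]) ω) 1) with hg_def
  have hgm : ∀ i, Measurable[G i] (g i) := fun i =>
    measurable_const.max (stronglyMeasurable_condExp.measurable.min measurable_const)
  have hg0 : ∀ i ω, 0 ≤ g i ω := fun i ω => le_max_left _ _
  have hg1 : ∀ i ω, g i ω ≤ 1 := fun i ω =>
    max_le (zero_le_one) (min_le_right _ _)
  have hpint : ∀ i, Integrable (p i) P := fun i =>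
    my_integrable_of_bound (hmeas i).aestronglyMeasurable
      (fun ω => abs_le.mpr ⟨by linarith [(hrange i ω).1], (hrange i ω).2⟩)
  have hgae : ∀ i, g i =ᵐ[P] P[p i | G i] := by
    intro i
    have h0 : 0 ≤ᵐ[P] P[p i | G i] :=
      condExp_nonneg (Filter.Eventually.of_forall fun ω => (hrange i ω).1)
    have h1 : P[p i | G i] ≤ᵐ[P] fun _ => (1:ℝ) := by
      have := condExp_mono (μ := P) (m := G i) (hpint i) (integrable_const (1:ℝ))
        (Filter.Eventually.of_forall fun ω => (hrange i ω).2)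
      rwa [condExp_const (hG i)] at this
    filter_upwards [h0, h1] with ω h0ω h1ω
    simp only [hg_def]
    rw [min_eq_left h1ω]
    exact max_eq_right h0ω
  -- key a.e. identity for the conditional expectation of the product
  have hA : (fun ω => ∏ i, g i ω) =ᵐ[P] P[(fun ω => ∏ i, p i ω) | ⨆ i, G i] :=
    my_condExp_prod G hG p hmeas hrange hindep g hgm hg0 hg1 hgae
  set F : Ω → ℝ := fun ω => ∏ i, p i ω with hF_def
  set gg : Ω → ℝ := fun ω => ∏ i, g i ω with hgg_def
  have hgg_meas : Measurable[mΩ] gg :=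
    Finset.measurable_prod _ fun i _ => (hgm i).mono (hG i) le_rfl
  have hgg0 : ∀ ω, 0 ≤ gg ω := fun ω => Finset.prod_nonneg fun i _ => hg0 i ω
  have hgg1 : ∀ ω, gg ω ≤ 1 := fun ω =>
    Finset.prod_le_one (fun i _ => hg0 i ω) (fun i _ => hg1 i ω)
  have hFmeas : Measurable[mΩ] F := Finset.measurable_prod _ fun i _ => hmeas i
  have hF0 : ∀ ω, 0 ≤ F ω := fun ω => Finset.prod_nonneg fun i _ => (hrange i ω).1
  have hF1 : ∀ ω, F ω ≤ 1 := fun ω =>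
    Finset.prod_le_one (fun i _ => (hrange i ω).1) (fun i _ => (hrange i ω).2)
  have hF2int : Integrable (fun ω => F ω ^ 2) P :=
    my_integrable_of_bound ((hFmeas.pow_const 2).aestronglyMeasurable)
      (fun ω => by
        rw [abs_of_nonneg (by positivity)]
        nlinarith [hF0 ω, hF1 ω])
  have hgg2int : Integrable (fun ω => gg ω ^ 2) P :=
    my_integrable_of_bound ((hgg_meas.pow_const 2).aestronglyMeasurable)
      (fun ω => by
        rw [abs_of_nonneg (by positivity)]
        nlinarith [hgg0 ω, hgg1 ω])
  have hA2 : (fun ω => gg ω ^ 2) =ᵐ[P]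
      (fun ω => ((P[(fun ω' => ∏ i, p i ω') | ⨆ i, G i]) ω) ^ 2) :=
    hA.mono fun ω h => by simp only at h ⊢; rw [← h]
  have hcond2int : Integrable (fun ω => ((P[(fun ω' => ∏ i, p i ω') | ⨆ i, G i]) ω) ^ 2) P :=
    hgg2int.congr hA2
  -- LHS computation
  have hLHS : ∫ ω, ((P[(fun ω' => (∏ i, p i ω') ^ 2) | ⨆ i, G i]) ω
        - ((P[(fun ω' => ∏ i, p i ω') | ⨆ i, G i]) ω) ^ 2) ∂P
      = (∏ i, ∫ ω, (p i ω) ^ 2 ∂P) - ∏ i, ∫ ω, (g i ω) ^ 2 ∂P := by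
    rw [integral_sub integrable_condExp hcond2int]
    have e1 : ∫ ω, (P[(fun ω' => (∏ i, p i ω') ^ 2) | ⨆ i, G i]) ω ∂P
        = ∫ ω, (∏ i, p i ω) ^ 2 ∂P := integral_condExp hm
    have e2 : ∫ ω, (∏ i, p i ω) ^ 2 ∂P = ∏ i, ∫ ω, (p i ω) ^ 2 ∂P := by
      have : ∀ ω, (∏ i, p i ω) ^ 2 = ∏ i, (p i ω) ^ 2 := fun ω =>
        (Finset.prod_pow _ _ _).symm
      simp_rw [this]
      exact my_integral_prod hQ hindep (fun i ω => (p i ω) ^ 2)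
        (fun i => (hpQ i).pow_const 2) (fun i ω => sq_nonneg _) Finset.univ
    have e3 : ∫ ω, ((P[(fun ω' => ∏ i, p i ω') | ⨆ i, G i]) ω) ^ 2 ∂P
        = ∏ i, ∫ ω, (g i ω) ^ 2 ∂P := by
      rw [← integral_congr_ae hA2]
      have : ∀ ω, gg ω ^ 2 = ∏ i, (g i ω) ^ 2 := fun ω => (Finset.prod_pow _ _ _).symm
      simp_rw [this]
      exact my_integral_prod hQ hindep (fun i ω => (g i ω) ^ 2)
        (fun i => (((hgm i).mono le_sup_right le_rfl).pow_const 2))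
        (fun i ω => sq_nonneg _) Finset.univ
    rw [e1, e2, e3]
  rw [hLHS]
  congr 1
  -- RHS factors
  refine Finset.prod_congr rfl fun i _ => ?_
  have hgi2int : Integrable (fun ω => (g i ω) ^ 2) P :=
    my_integrable_of_bound ((((hgm i).mono (hG i) le_rfl).pow_const 2).aestronglyMeasurable)
      (fun ω => by
        rw [abs_of_nonneg (by positivity)]
        nlinarith [hg0 i ω, hg1 i ω])
  have hA2i : (fun ω => (g i ω) ^ 2) =ᵐ[P] (fun ω => ((P[p i | G i]) ω) ^ 2) :=
    (hgae i).mono fun ω h => by dsimp only; rw [h]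
  have hcondi2int : Integrable (fun ω => ((P[p i | G i]) ω) ^ 2) P := hgi2int.congr hA2i
  have hpi2int : Integrable (fun ω => (p i ω) ^ 2) P :=
    my_integrable_of_bound (((hmeas i).pow_const 2).aestronglyMeasurable)
      (fun ω => by
        rw [abs_of_nonneg (by positivity)]
        nlinarith [(hrange i ω).1, (hrange i ω).2])
  rw [integral_sub integrable_condExp hcondi2int]
  rw [integral_condExp (hG i)]
  rw [← integral_congr_ae hA2i]
  ring
end

section
/- Let (Ω, F, P) be a probability space with a filtration (F_L)_{L∈ℕ}, and let V_1, ..., V_n be random variables measurable with respect to F_∞ = ∨_L F_L, with 0 < V_i ≤ 1 almost surely for each i. For m ∈ ℕ set L(m) = ⌊√m⌋ and U_i^{(m)} = E[V_i | F_{L(m)}]; define the two-stage allocation m_i(m) = max{ L(m), ⌊ m·√(U_i^{(m)}) / ∑_{j=1}^n √(U_j^{(m)}) ⌋ } for i = 1, ..., n−1, and m_n(m) = m − ∑_{i=1}^{n−1} m_i(m). Then for every i ∈ {1, ..., n}, m_i(m)/m → √V_i / ∑_{j=1}^n √V_j almost surely as m → ∞. -/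
open MeasureTheory ProbabilityTheory Filter Finset

private lemma natSqrt_tendsto_atTop : Tendsto (fun m : ℕ => Nat.sqrt m) atTop atTop :=
  tendsto_atTop_atTop.2 fun b => ⟨b * b, fun m hm => Nat.le_sqrt.2 hm⟩

private lemma natSqrt_div_tendsto_zero :
    Tendsto (fun m : ℕ => (Nat.sqrt m : ℝ) / m) atTop (nhds 0) := by
  have hup : Tendsto (fun m : ℕ => 1 / (Nat.sqrt m : ℝ)) atTop (nhds 0) := by
    simp only [one_div]
    exact tendsto_inv_atTop_zero.comp
      (tendsto_natCast_atTop_atTop.comp natSqrt_tendsto_atTop)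
  refine tendsto_of_tendsto_of_tendsto_of_le_of_le' tendsto_const_nhds hup ?_ ?_
  · filter_upwards [eventually_ge_atTop 1] with m hm
    positivity
  · filter_upwards [eventually_ge_atTop 1] with m hm
    have hs1 : (1 : ℕ) ≤ Nat.sqrt m := Nat.le_sqrt.2 (by simpa using hm)
    have hs : (0 : ℝ) < (Nat.sqrt m : ℝ) := by exact_mod_cast hs1
    have hmul : (Nat.sqrt m : ℝ) * (Nat.sqrt m : ℝ) ≤ m := by exact_mod_cast Nat.sqrt_le m
    have hm0 : (0 : ℝ) < m := by exact_mod_cast hm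
    rw [div_le_div_iff₀ hm0 hs]
    nlinarith

/-- Lemma 4.1.1: the two-stage allocation sizes `m i (m)` for a parallel system of `n+1`
components satisfy `m i (m) / m → √(V i) / ∑ √(V j)` almost surely. -/
theorem two_stage_allocation_as {Ω : Type*} {mΩ : MeasurableSpace Ω} (P : Measure Ω)
    [IsProbabilityMeasure P] (F : ℕ → MeasurableSpace Ω)
    (hFmono : Monotone F) (hFle : ∀ L, F L ≤ mΩ)
    (n : ℕ) (V : Fin (n + 1) → Ω → ℝ)
    (hVmeas : ∀ i, Measurable[⨆ L, F L] (V i))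
    (hV : ∀ i, ∀ᵐ ω ∂P, V i ω ∈ Set.Ioc (0 : ℝ) 1)
    (alloc : ℕ → Fin (n + 1) → Ω → ℤ)
    (hAlloc : ∀ m (ω : Ω) (i : Fin (n + 1)), (i : ℕ) < n →
      alloc m i ω = max (Nat.sqrt m : ℤ)
        ⌊(m : ℝ) * Real.sqrt ((P[V i | F (Nat.sqrt m)]) ω) /
          ∑ j, Real.sqrt ((P[V j | F (Nat.sqrt m)]) ω)⌋)
    (hAllocLast : ∀ m (ω : Ω),
      alloc m (Fin.last n) ω =
        (m : ℤ) - ∑ i ∈ Finset.univ.filter (fun i : Fin (n + 1) => (i : ℕ) < n),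
          alloc m i ω) :
    ∀ i, ∀ᵐ ω ∂P, Tendsto (fun m => (alloc m i ω : ℝ) / m) atTop
      (nhds (Real.sqrt (V i ω) / ∑ j, Real.sqrt (V j ω))) := by
  classical
  let ℱ : Filtration ℕ mΩ := ⟨F, hFmono, hFle⟩
  have hle : (⨆ L, F L) ≤ mΩ := iSup_le hFle
  have hint : ∀ i, Integrable (V i) P := by
    intro i
    have hm : Measurable (V i) := (hVmeas i).mono hle le_rfl
    refine Integrable.mono' (integrable_const (1 : ℝ)) hm.aestronglyMeasurable ?_
    filter_upwards [hV i] with ω hω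
    rw [Real.norm_eq_abs, abs_le]
    constructor <;> [linarith [hω.1]; exact hω.2]
  have hcond : ∀ i, ∀ᵐ ω ∂P, Tendsto (fun L => (P[V i | F L]) ω) atTop (nhds (V i ω)) := by
    intro i
    exact (hint i).tendsto_ae_condExp (ℱ := ℱ) ((hVmeas i).stronglyMeasurable)
  intro i
  filter_upwards [ae_all_iff.2 hV, ae_all_iff.2 hcond] with ω hVω hcω
  set S : ℝ := ∑ j, Real.sqrt (V j ω) with hS
  have hSpos : 0 < S :=
    Finset.sum_pos (fun j _ => Real.sqrt_pos.2 (hVω j).1) ⟨0, Finset.mem_univ 0⟩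
  have hratio : ∀ j, Tendsto (fun m : ℕ => Real.sqrt ((P[V j | F (Nat.sqrt m)]) ω))
      atTop (nhds (Real.sqrt (V j ω))) := fun j =>
    (Real.continuous_sqrt.tendsto _).comp ((hcω j).comp natSqrt_tendsto_atTop)
  have hden : Tendsto (fun m : ℕ => ∑ j, Real.sqrt ((P[V j | F (Nat.sqrt m)]) ω))
      atTop (nhds S) := tendsto_finset_sum _ fun j _ => hratio j
  have hr : ∀ j, Tendsto (fun m : ℕ => Real.sqrt ((P[V j | F (Nat.sqrt m)]) ω) /
        ∑ k, Real.sqrt ((P[V k | F (Nat.sqrt m)]) ω))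
      atTop (nhds (Real.sqrt (V j ω) / S)) := fun j => (hratio j).div hden hSpos.ne'
  have hlt : ∀ j : Fin (n + 1), (j : ℕ) < n →
      Tendsto (fun m : ℕ => (alloc m j ω : ℝ) / m) atTop (nhds (Real.sqrt (V j ω) / S)) := by
    intro j hj
    set rm : ℕ → ℝ := fun m => Real.sqrt ((P[V j | F (Nat.sqrt m)]) ω) /
        ∑ k, Real.sqrt ((P[V k | F (Nat.sqrt m)]) ω) with hrm
    have hfloor : Tendsto (fun m : ℕ => (⌊(m : ℝ) * rm m⌋ : ℝ) / m) atTop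
        (nhds (Real.sqrt (V j ω) / S)) := by
      have hlow : Tendsto (fun m : ℕ => rm m - 1 / (m : ℝ)) atTop
          (nhds (Real.sqrt (V j ω) / S)) := by
        have := (hr j).sub tendsto_one_div_atTop_nhds_zero_nat
        simpa using this
      have hup : Tendsto (fun m : ℕ => (m : ℝ) * rm m / m) atTop
          (nhds (Real.sqrt (V j ω) / S)) := by
        refine (hr j).congr' ?_
        filter_upwards [eventually_ge_atTop 1] with m hm
        have hm0 : (m : ℝ) ≠ 0 := by positivity
        field_simp [mul_comm]
        rfl
      refine tendsto_of_tendsto_of_tendsto_of_le_of_le' hlow hup ?_ ?_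
      · filter_upwards [eventually_ge_atTop 1] with m hm
        have hm0 : (0 : ℝ) < m := by exact_mod_cast hm
        rw [le_div_iff₀ hm0]
        have h1 : (m : ℝ) * rm m - 1 < (⌊(m : ℝ) * rm m⌋ : ℝ) := Int.sub_one_lt_floor _
        have h2 : (rm m - 1 / m) * m = (m : ℝ) * rm m - 1 := by field_simp
        linarith
      · filter_upwards [eventually_ge_atTop 1] with m hm
        have hm0 : (0 : ℝ) < m := by exact_mod_cast hm
        have h2 : ((⌊(m : ℝ) * rm m⌋ : ℝ)) ≤ (m : ℝ) * rm m := Int.floor_le _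
        rw [div_le_div_iff₀ hm0 hm0]
        nlinarith
    have heq : ∀ᶠ m : ℕ in atTop, (alloc m j ω : ℝ) / m
        = max ((Nat.sqrt m : ℝ) / m) ((⌊(m : ℝ) * rm m⌋ : ℝ) / m) := by
      filter_upwards [eventually_ge_atTop 1] with m hm
      have hm0 : (0 : ℝ) ≤ m := by positivity
      rw [hAlloc m ω j hj, max_div_div_right hm0]
      push_cast [mul_div_assoc]
      rfl
    have := (natSqrt_div_tendsto_zero.max hfloor).congr' (heq.mono fun m h => h.symm)
    rwa [max_eq_right (by positivity)] at this
  by_cases hj : (i : ℕ) < n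
  · exact hlt i hj
  · have hi : i = Fin.last n := by
      have := i.isLt
      apply Fin.ext
      simp only [Fin.val_last]
      omega
    subst hi
    have hfe : Finset.univ.filter (fun j : Fin (n + 1) => (j : ℕ) < n)
        = Finset.univ.erase (Fin.last n) := by
      ext j
      have := j.isLt
      simp only [Finset.mem_filter, Finset.mem_erase, Finset.mem_univ, true_and, and_true,
        Ne, Fin.ext_iff, Fin.val_last]
      omega
    have hsum1 : ∑ j, Real.sqrt (V j ω) / S = 1 := by
      rw [← Finset.sum_div, ← hS, div_self hSpos.ne']
    have hsumerase : ∑ j ∈ Finset.univ.erase (Fin.last n), Real.sqrt (V j ω) / S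
        = 1 - Real.sqrt (V (Fin.last n) ω) / S := by
      have := Finset.sum_erase_add Finset.univ (fun j => Real.sqrt (V j ω) / S)
        (Finset.mem_univ (Fin.last n))
      rw [hsum1] at this
      linarith
    have htend : Tendsto (fun m : ℕ => 1 - ∑ j ∈ Finset.univ.filter
          (fun j : Fin (n + 1) => (j : ℕ) < n), (alloc m j ω : ℝ) / m) atTop
        (nhds (Real.sqrt (V (Fin.last n) ω) / S)) := by
      have h1 : Tendsto (fun m : ℕ => ∑ j ∈ Finset.univ.filter
            (fun j : Fin (n + 1) => (j : ℕ) < n), (alloc m j ω : ℝ) / m) atTop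
          (nhds (∑ j ∈ Finset.univ.filter (fun j : Fin (n + 1) => (j : ℕ) < n),
            Real.sqrt (V j ω) / S)) :=
        tendsto_finset_sum _ fun j hjmem => hlt j (Finset.mem_filter.1 hjmem).2
      have hval : ∑ j ∈ Finset.univ.filter (fun j : Fin (n + 1) => (j : ℕ) < n),
          Real.sqrt (V j ω) / S = 1 - Real.sqrt (V (Fin.last n) ω) / S := by
        rw [hfe]; exact hsumerase
      have := tendsto_const_nhds (x := (1 : ℝ)) (f := atTop (α := ℕ)) |>.sub h1
      rwa [hval, sub_sub_cancel] at this
    refine htend.congr' ?_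
    filter_upwards [eventually_ge_atTop 1] with m hm
    have hm0 : (m : ℝ) ≠ 0 := by positivity
    rw [hAllocLast m ω]
    push_cast
    rw [sub_div, div_self hm0, Finset.sum_div]
end

section
/- Let (Ω, F, P) be a probability space with a filtration (F_L)_{L∈ℕ}, let ε > 0, and let V_1, ..., V_n be random variables measurable with respect to F_∞ = ∨_L F_L, with ε ≤ V_i ≤ 1 almost surely for each i. Let r_1, ..., r_n > 0 be constants. For m ∈ ℕ set L(m) = ⌊√m⌋ and U_i^{(m)} = E[V_i | F_{L(m)}]; define m_i(m) = max{ L(m), ⌊ m·√(U_i^{(m)}) / ∑_{j=1}^n √(U_j^{(m)}) ⌋ } for i = 1, ..., n−1, and m_n(m) = m − ∑_{i=1}^{n−1} m_i(m). Then lim_{m→∞} m · E[ ∑_{i=1}^n V_i / (m_i(m) + r_i) ] = E[ (∑_{i=1}^n √V_i)² ]. -/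
open MeasureTheory ProbabilityTheory Filter Finset

lemma tsfo_filter_not (n : ℕ) :
    (Finset.univ.filter (fun i : Fin (n+1) => ¬((i:ℕ) < n))) = {Fin.last n} := by
  ext i
  have := i.isLt
  simp only [Finset.mem_filter, Finset.mem_univ, true_and, not_lt, Finset.mem_singleton,
    Fin.ext_iff, Fin.val_last]
  omega

lemma tsfo_card_filter (n : ℕ) :
    (Finset.univ.filter (fun i : Fin (n+1) => (i:ℕ) < n)).card = n := by
  have h := Finset.card_filter_add_card_filter_not
    (s := (Finset.univ : Finset (Fin (n+1)))) (p := fun i => (i:ℕ) < n)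
  rw [tsfo_filter_not] at h
  simp only [Finset.card_singleton, Finset.card_univ, Fintype.card_fin] at h
  omega

lemma tsfo_sqrt_atTop : Tendsto Nat.sqrt atTop atTop := by
  refine tendsto_atTop_atTop_of_monotone (fun a b h => Nat.sqrt_le_sqrt h) (fun b => ⟨b^2, ?_⟩)
  rw [Nat.sqrt_eq']

lemma tsfo_ev (n : ℕ) (c0 : ℝ) (hc0 : 0 < c0) :
    ∀ᶠ m : ℕ in atTop, 2*((n:ℝ)+1)*((Nat.sqrt m:ℝ)+1) ≤ (m:ℝ)*c0 := by
  have hK : ∀ᶠ m : ℕ in atTop, (⌈4*((n:ℝ)+1)/c0⌉₊ : ℕ) ≤ Nat.sqrt m :=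
    tsfo_sqrt_atTop.eventually_ge_atTop _
  filter_upwards [hK, tsfo_sqrt_atTop.eventually_ge_atTop 1] with m hKm h1
  have hA : 4*((n:ℝ)+1)/c0 ≤ (Nat.sqrt m : ℝ) :=
    le_trans (Nat.le_ceil _) (by exact_mod_cast hKm)
  have hA' : 4*((n:ℝ)+1) ≤ c0 * (Nat.sqrt m : ℝ) := by
    rw [div_le_iff₀ hc0] at hA; linarith
  have hB : ((Nat.sqrt m : ℝ)) * (Nat.sqrt m : ℝ) ≤ (m:ℝ) := by
    exact_mod_cast Nat.sqrt_le m
  have hL1 : (1:ℝ) ≤ (Nat.sqrt m : ℝ) := by exact_mod_cast h1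
  have hn0 : (0:ℝ) ≤ (n:ℝ) := Nat.cast_nonneg _
  nlinarith [mul_le_mul_of_nonneg_right hA' (by linarith : (0:ℝ) ≤ (Nat.sqrt m : ℝ))]

/-- Basic facts about the allocation proportions. -/
lemma tsfo_rho (n : ℕ) (ε : ℝ) (hε : 0 < ε) (u : Fin (n+1) → ℝ)
    (hu : ∀ i, u i ∈ Set.Icc ε 1) :
    (∀ i, Real.sqrt ε / ((n:ℝ)+1) ≤ Real.sqrt (u i) / ∑ j, Real.sqrt (u j)) ∧
      (∑ i, Real.sqrt (u i) / ∑ j, Real.sqrt (u j)) = 1 := by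
  have hsq_lb : ∀ i, Real.sqrt ε ≤ Real.sqrt (u i) := fun i => Real.sqrt_le_sqrt (hu i).1
  have hsq_ub : ∀ i, Real.sqrt (u i) ≤ 1 := fun i => by
    have := Real.sqrt_le_sqrt (hu i).2; simpa using this
  have hs_pos : 0 < ∑ j, Real.sqrt (u j) :=
    Finset.sum_pos (fun i _ => lt_of_lt_of_le (Real.sqrt_pos.2 hε) (hsq_lb i))
      Finset.univ_nonempty
  have hs_ub : (∑ j, Real.sqrt (u j)) ≤ (n:ℝ)+1 := by
    calc (∑ j, Real.sqrt (u j)) ≤ ∑ _j : Fin (n+1), (1:ℝ) :=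
          Finset.sum_le_sum (fun j _ => hsq_ub j)
      _ = (n:ℝ)+1 := by simp
  exact ⟨fun i => div_le_div₀ (Real.sqrt_nonneg _) (hsq_lb i) hs_pos hs_ub,
    by rw [← Finset.sum_div, div_self hs_pos.ne']⟩

lemma tsfo_alloc_lower (n : ℕ) (c0 : ℝ) (hc0 : 0 < c0) (m : ℕ)
    (ρ : Fin (n+1) → ℝ) (hρ : ∀ i, c0 ≤ ρ i) (hρs : ∑ i, ρ i = 1)
    (a : Fin (n+1) → ℤ)
    (ha : ∀ i : Fin (n+1), (i:ℕ) < n → a i = max ((Nat.sqrt m : ℤ)) ⌊(m:ℝ) * ρ i⌋)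
    (halast : a (Fin.last n) = (m:ℤ) - ∑ i ∈ Finset.univ.filter (fun i : Fin (n+1) => (i:ℕ) < n), a i)
    (hm : 2*((n:ℝ)+1)*((Nat.sqrt m:ℝ)+1) ≤ (m:ℝ)*c0) :
    ∀ i, (m:ℝ)*c0/2 ≤ (a i : ℝ) := by
  have hLs0 : (0:ℝ) ≤ (Nat.sqrt m : ℝ) := Nat.cast_nonneg _
  have hn0 : (0:ℝ) ≤ (n:ℝ) := Nat.cast_nonneg _
  have hmc2 : 2 ≤ (m:ℝ)*c0 := le_trans (by nlinarith) hm
  have hm0 : (0:ℝ) ≤ (m:ℝ) := Nat.cast_nonneg _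
  intro i
  by_cases hi : (i:ℕ) < n
  · rw [ha i hi]
    push_cast
    have h1 : (m:ℝ)*c0 - 1 ≤ (⌊(m:ℝ)*ρ i⌋ : ℝ) := by
      refine le_trans ?_ (Int.sub_one_lt_floor _).le
      have := mul_le_mul_of_nonneg_left (hρ i) hm0
      linarith
    have : (m:ℝ)*c0/2 ≤ (⌊(m:ℝ)*ρ i⌋ : ℝ) := by linarith
    exact le_trans this (le_max_right _ _)
  · have hi' : i = Fin.last n := by
      have := i.isLt
      exact Fin.ext (by simp only [Fin.val_last]; omega)
    subst hi'
    rw [halast]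
    push_cast
    have hub : ∀ j ∈ Finset.univ.filter (fun i : Fin (n+1) => (i:ℕ) < n),
        (a j : ℝ) ≤ (Nat.sqrt m : ℝ) + (m:ℝ)*ρ j := by
      intro j hj
      rw [ha j (Finset.mem_filter.1 hj).2]
      push_cast
      have hρj0 : 0 ≤ (m:ℝ)*ρ j := mul_nonneg hm0 (le_trans hc0.le (hρ j))
      exact max_le (by linarith) (le_trans (Int.floor_le _) (by linarith))
    have hsum : (∑ j ∈ Finset.univ.filter (fun i : Fin (n+1) => (i:ℕ) < n), (a j : ℝ))
        ≤ (n:ℝ) * (Nat.sqrt m : ℝ) + (m:ℝ) * (1 - c0) := by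
      calc (∑ j ∈ Finset.univ.filter (fun i : Fin (n+1) => (i:ℕ) < n), (a j : ℝ))
          ≤ ∑ j ∈ Finset.univ.filter (fun i : Fin (n+1) => (i:ℕ) < n),
              ((Nat.sqrt m : ℝ) + (m:ℝ)*ρ j) := Finset.sum_le_sum hub
        _ = (n:ℝ) * (Nat.sqrt m : ℝ)
              + (m:ℝ) * ∑ j ∈ Finset.univ.filter (fun i : Fin (n+1) => (i:ℕ) < n), ρ j := by
            rw [Finset.sum_add_distrib, Finset.sum_const, tsfo_card_filter, nsmul_eq_mul,
              Finset.mul_sum]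
        _ ≤ (n:ℝ) * (Nat.sqrt m : ℝ) + (m:ℝ) * (1 - c0) := by
            have hd := Finset.sum_filter_add_sum_filter_not (Finset.univ : Finset (Fin (n+1)))
              (fun i => (i:ℕ) < n) ρ
            rw [tsfo_filter_not, Finset.sum_singleton, hρs] at hd
            have : ∑ j ∈ Finset.univ.filter (fun i : Fin (n+1) => (i:ℕ) < n), ρ j ≤ 1 - c0 := by
              have := hρ (Fin.last n); linarith
            nlinarith
    nlinarith [hsum]

lemma tsfo_pointwise (n : ℕ) (ε : ℝ) (hε : 0 < ε) (r : Fin (n+1) → ℝ) (hr : ∀ i, 0 < r i)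
    (v : Fin (n+1) → ℝ) (hv : ∀ i, v i ∈ Set.Icc ε 1)
    (u : ℕ → Fin (n+1) → ℝ)
    (hu : ∀ m i, u m i ∈ Set.Icc ε 1)
    (hulim : ∀ i, Tendsto (fun m => u m i) atTop (nhds (v i)))
    (a : ℕ → Fin (n+1) → ℤ)
    (ha : ∀ m, ∀ i : Fin (n+1), (i:ℕ) < n → a m i = max ((Nat.sqrt m : ℤ))
      ⌊(m:ℝ) * Real.sqrt (u m i) / ∑ j, Real.sqrt (u m j)⌋)
    (halast : ∀ m, a m (Fin.last n) = (m:ℤ)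
      - ∑ i ∈ Finset.univ.filter (fun i : Fin (n+1) => (i:ℕ) < n), a m i) :
    Tendsto (fun m : ℕ => (m:ℝ) * ∑ i, v i / ((a m i : ℝ) + r i)) atTop
      (nhds ((∑ i, Real.sqrt (v i)) ^ 2)) := by
  classical
  set c0 : ℝ := Real.sqrt ε / ((n:ℝ)+1) with hc0def
  have hn1 : (0:ℝ) < (n:ℝ)+1 := by positivity
  have hc0 : 0 < c0 := div_pos (Real.sqrt_pos.2 hε) hn1
  set s : ℕ → ℝ := fun m => ∑ j, Real.sqrt (u m j) with hsdef
  set S : ℝ := ∑ j, Real.sqrt (v j) with hSdef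
  have hsq_lb : ∀ m i, Real.sqrt ε ≤ Real.sqrt (u m i) :=
    fun m i => Real.sqrt_le_sqrt (hu m i).1
  have hsq_ub : ∀ m i, Real.sqrt (u m i) ≤ 1 := fun m i => by
    have := Real.sqrt_le_sqrt (hu m i).2
    simpa using this
  have hs_pos : ∀ m, 0 < s m := fun m =>
    Finset.sum_pos (fun i _ => lt_of_lt_of_le (Real.sqrt_pos.2 hε) (hsq_lb m i))
      Finset.univ_nonempty
  have hs_ub : ∀ m, s m ≤ (n:ℝ)+1 := fun m => by
    calc s m ≤ ∑ _j : Fin (n+1), (1:ℝ) := Finset.sum_le_sum (fun j _ => hsq_ub m j)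
      _ = (n:ℝ)+1 := by simp
  have hρ_lb : ∀ m i, c0 ≤ Real.sqrt (u m i) / s m := fun m i =>
    div_le_div₀ (Real.sqrt_nonneg _) (hsq_lb m i) (hs_pos m) (hs_ub m)
  have hS_pos : 0 < S :=
    Finset.sum_pos (fun i _ => Real.sqrt_pos.2 (lt_of_lt_of_le hε (hv i).1))
      Finset.univ_nonempty
  set R : Fin (n+1) → ℝ := fun i => Real.sqrt (v i) / S with hRdef
  have hR_pos : ∀ i, 0 < R i := fun i =>
    div_pos (Real.sqrt_pos.2 (lt_of_lt_of_le hε (hv i).1)) hS_pos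
  have hR_sum : ∑ i, R i = 1 := by rw [hRdef, ← Finset.sum_div, div_self hS_pos.ne']
  have hs_lim : Tendsto s atTop (nhds S) :=
    tendsto_finset_sum _ (fun j _ => (hulim j).sqrt)
  have hρ_lim : ∀ i, Tendsto (fun m => Real.sqrt (u m i) / s m) atTop (nhds (R i)) :=
    fun i => ((hulim i).sqrt).div hs_lim hS_pos.ne'
  have h_ev : ∀ᶠ m : ℕ in atTop, 2*((n:ℝ)+1)*((Nat.sqrt m:ℝ)+1) ≤ (m:ℝ)*c0 :=
    tsfo_ev n c0 hc0
  -- eventually, the max is the floor, for i < n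
  have h_floor : ∀ᶠ m : ℕ in atTop, ∀ i : Fin (n+1), (i:ℕ) < n →
      a m i = ⌊(m:ℝ) * (Real.sqrt (u m i) / s m)⌋ := by
    filter_upwards [h_ev] with m hm i hi
    rw [ha m i hi, mul_div_assoc, max_eq_right]
    rw [Int.le_floor]
    push_cast
    have h1 : (m:ℝ)*c0 ≤ (m:ℝ) * (Real.sqrt (u m i) / s m) :=
      mul_le_mul_of_nonneg_left (hρ_lb m i) (Nat.cast_nonneg m)
    have h2 : ((Nat.sqrt m : ℝ)) ≤ 2*((n:ℝ)+1)*((Nat.sqrt m:ℝ)+1) := by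
      have hn0 : (0:ℝ) ≤ (n:ℝ) := Nat.cast_nonneg _
      have hL0 : (0:ℝ) ≤ (Nat.sqrt m : ℝ) := Nat.cast_nonneg _
      nlinarith
    linarith
  -- limits of a m i / m, i < n
  have hd : ∀ i : Fin (n+1), (i:ℕ) < n →
      Tendsto (fun m : ℕ => (a m i : ℝ) / m) atTop (nhds (R i)) := by
    intro i hi
    have hlow : Tendsto (fun m : ℕ => Real.sqrt (u m i) / s m - 1/(m:ℝ)) atTop (nhds (R i)) := by
      simpa using (hρ_lim i).sub tendsto_one_div_atTop_nhds_zero_nat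
    refine tendsto_of_tendsto_of_tendsto_of_le_of_le' hlow (hρ_lim i) ?_ ?_
    · filter_upwards [h_floor, eventually_ge_atTop 1] with m hm h1
      have hm0 : (0:ℝ) < (m:ℝ) := by exact_mod_cast h1
      rw [hm i hi, le_div_iff₀ hm0]
      have hexp : (Real.sqrt (u m i) / s m - 1/(m:ℝ)) * m
          = (m:ℝ) * (Real.sqrt (u m i) / s m) - 1 := by
        field_simp
      rw [hexp]
      exact (Int.sub_one_lt_floor _).le
    · filter_upwards [h_floor, eventually_ge_atTop 1] with m hm h1
      have hm0 : (0:ℝ) < (m:ℝ) := by exact_mod_cast h1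
      rw [hm i hi, div_le_iff₀ hm0]
      exact (Int.floor_le _).trans (le_of_eq (mul_comm _ _))
  -- limit of a m (last) / m
  have hdecomp := Finset.sum_filter_add_sum_filter_not (Finset.univ : Finset (Fin (n+1)))
    (fun i => (i:ℕ) < n) R
  rw [tsfo_filter_not, Finset.sum_singleton, hR_sum] at hdecomp
  have hd_last : Tendsto (fun m : ℕ => (a m (Fin.last n) : ℝ) / m) atTop
      (nhds (R (Fin.last n))) := by
    have heq : ∀ᶠ m : ℕ in atTop, (1:ℝ)
        - ∑ i ∈ Finset.univ.filter (fun i : Fin (n+1) => (i:ℕ) < n), (a m i : ℝ)/m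
        = (a m (Fin.last n) : ℝ)/m := by
      filter_upwards [eventually_ge_atTop 1] with m h1
      have hm0 : ((m:ℝ)) ≠ 0 := Nat.cast_ne_zero.mpr (by omega)
      rw [halast m]
      push_cast
      rw [sub_div, div_self hm0, Finset.sum_div]
    have htend : Tendsto (fun m : ℕ => (1:ℝ)
        - ∑ i ∈ Finset.univ.filter (fun i : Fin (n+1) => (i:ℕ) < n), (a m i : ℝ)/m) atTop
        (nhds (1 - ∑ i ∈ Finset.univ.filter (fun i : Fin (n+1) => (i:ℕ) < n), R i)) :=
      tendsto_const_nhds.sub (tendsto_finset_sum _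
        (fun i hi => hd i (Finset.mem_filter.1 hi).2))
    have hval : 1 - ∑ i ∈ Finset.univ.filter (fun i : Fin (n+1) => (i:ℕ) < n), R i
        = R (Fin.last n) := by linarith
    rw [hval] at htend
    exact htend.congr' heq
  have hd_all : ∀ i : Fin (n+1), Tendsto (fun m : ℕ => (a m i : ℝ) / m) atTop (nhds (R i)) := by
    intro i
    by_cases hi : (i:ℕ) < n
    · exact hd i hi
    · have : i = Fin.last n := by
        have := i.isLt
        exact Fin.ext (by simp only [Fin.val_last]; omega)
      rw [this]; exact hd_last
  -- per-term limits
  have hterm : ∀ i : Fin (n+1), Tendsto (fun m : ℕ => v i / ((a m i : ℝ)/m + r i/(m:ℝ)))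
      atTop (nhds (Real.sqrt (v i) * S)) := by
    intro i
    have hden : Tendsto (fun m : ℕ => (a m i : ℝ)/m + r i/(m:ℝ)) atTop (nhds (R i)) := by
      simpa using (hd_all i).add (tendsto_const_div_atTop_nhds_zero_nat (r i))
    have hvpos : 0 < v i := lt_of_lt_of_le hε (hv i).1
    have hsv : 0 < Real.sqrt (v i) := Real.sqrt_pos.2 hvpos
    have hlim : Tendsto (fun m : ℕ => v i / ((a m i : ℝ)/m + r i/(m:ℝ))) atTop
        (nhds (v i / R i)) := Tendsto.div tendsto_const_nhds hden (hR_pos i).ne'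
    have hvR : v i / R i = Real.sqrt (v i) * S := by
      show v i / (Real.sqrt (v i) / S) = _
      rw [div_div_eq_mul_div, div_eq_iff hsv.ne']
      linear_combination (-S) * (Real.sq_sqrt hvpos.le)
    rwa [hvR] at hlim
  have hsum_lim : Tendsto (fun m : ℕ => ∑ i, v i / ((a m i : ℝ)/m + r i/(m:ℝ))) atTop
      (nhds (∑ i, Real.sqrt (v i) * S)) :=
    tendsto_finset_sum _ (fun i _ => hterm i)
  have hfun : (fun m : ℕ => (m:ℝ) * ∑ i, v i / ((a m i:ℝ) + r i))
      = fun m : ℕ => ∑ i, v i / ((a m i:ℝ)/m + r i/(m:ℝ)) := by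
    funext m
    rw [Finset.mul_sum]
    refine Finset.sum_congr rfl (fun i _ => ?_)
    rw [← add_div, div_div_eq_mul_div, mul_comm (v i) ((m:ℝ)), mul_div_assoc]
  rw [hfun]
  have hS2 : S^2 = ∑ i, Real.sqrt (v i) * S := by
    rw [sq]
    conv_lhs => rw [hSdef]
    rw [Finset.sum_mul]
  rw [hS2]
  exact hsum_lim

/-- First-order optimality for the parallel system: along the two-stage allocation,
`m · E[∑ V i / (m i (m) + r i)] → E[(∑ √(V i))²]`. -/
theorem two_stage_first_order_optimality {Ω : Type*} {mΩ : MeasurableSpace Ω} (P : Measure Ω)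
    [IsProbabilityMeasure P] (F : ℕ → MeasurableSpace Ω)
    (hFmono : Monotone F) (hFle : ∀ L, F L ≤ mΩ)
    (ε : ℝ) (hε : 0 < ε)
    (n : ℕ) (V : Fin (n + 1) → Ω → ℝ)
    (hVmeas : ∀ i, Measurable[⨆ L, F L] (V i))
    (hV : ∀ i, ∀ᵐ ω ∂P, V i ω ∈ Set.Icc ε 1)
    (r : Fin (n + 1) → ℝ) (hr : ∀ i, 0 < r i)
    (alloc : ℕ → Fin (n + 1) → Ω → ℤ)
    (hAlloc : ∀ m (ω : Ω) (i : Fin (n + 1)), (i : ℕ) < n →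
      alloc m i ω = max (Nat.sqrt m : ℤ)
        ⌊(m : ℝ) * Real.sqrt ((P[V i | F (Nat.sqrt m)]) ω) /
          ∑ j, Real.sqrt ((P[V j | F (Nat.sqrt m)]) ω)⌋)
    (hAllocLast : ∀ m (ω : Ω),
      alloc m (Fin.last n) ω =
        (m : ℤ) - ∑ i ∈ Finset.univ.filter (fun i : Fin (n + 1) => (i : ℕ) < n),
          alloc m i ω) :
    Tendsto (fun m : ℕ => (m : ℝ) * ∫ ω, ∑ i, V i ω / ((alloc m i ω : ℝ) + r i) ∂P)
      atTop (nhds (∫ ω, (∑ i, Real.sqrt (V i ω)) ^ 2 ∂P)) := by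
  classical
  set c0 : ℝ := Real.sqrt ε / ((n:ℝ)+1) with hc0def
  have hn1 : (0:ℝ) < (n:ℝ)+1 := by positivity
  have hc0 : 0 < c0 := div_pos (Real.sqrt_pos.2 hε) hn1
  set ℱ : Filtration ℕ mΩ := ⟨F, hFmono, hFle⟩ with hℱdef
  have hiSup_le : (⨆ L, F L) ≤ mΩ := iSup_le hFle
  have hVm : ∀ i, Measurable (V i) := fun i => (hVmeas i).mono hiSup_le le_rfl
  have hVint : ∀ i, Integrable (V i) P := by
    intro i
    refine (integrable_const (1:ℝ)).mono' (hVm i).aestronglyMeasurable ?_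
    filter_upwards [hV i] with ω hω
    rw [Real.norm_eq_abs, abs_le]
    constructor <;> [linarith [hω.1]; exact hω.2]
  -- conditional expectations stay in [ε, 1]
  have hcond : ∀ (L : ℕ) i, ∀ᵐ ω ∂P, (P[V i | F L]) ω ∈ Set.Icc ε 1 := by
    intro L i
    have hlow := condExp_mono (m := F L) (integrable_const ε) (hVint i)
      ((hV i).mono fun ω h => h.1)
    have hup := condExp_mono (m := F L) (hVint i) (integrable_const (1:ℝ))
      ((hV i).mono fun ω h => h.2)
    rw [condExp_const (hFle L)] at hlow
    rw [condExp_const (hFle L)] at hup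
    filter_upwards [hlow, hup] with ω h1 h2
    exact ⟨h1, h2⟩
  -- Lévy upward convergence
  have hLevy : ∀ i, ∀ᵐ ω ∂P, Tendsto (fun L => (P[V i | F L]) ω) atTop (nhds (V i ω)) := by
    intro i
    exact (hVint i).tendsto_ae_condExp (ℱ := ℱ) (hVmeas i).stronglyMeasurable
  have hgood : ∀ᵐ ω ∂P, (∀ i, V i ω ∈ Set.Icc ε 1) ∧
      (∀ (L : ℕ) i, (P[V i | F L]) ω ∈ Set.Icc ε 1) ∧
      (∀ i, Tendsto (fun L => (P[V i | F L]) ω) atTop (nhds (V i ω))) := by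
    refine ((ae_all_iff.2 hV).and ((ae_all_iff.2 fun L => ae_all_iff.2 fun i => hcond L i).and
      (ae_all_iff.2 hLevy))).mono ?_
    tauto
  -- measurability of the allocations
  have hCondMeas : ∀ (L : ℕ) i, Measurable (P[V i | F L]) :=
    fun L i => (stronglyMeasurable_condExp.mono (hFle L)).measurable
  have hRatioMeas : ∀ (m : ℕ) i, Measurable (fun ω =>
      (m : ℝ) * Real.sqrt ((P[V i | F (Nat.sqrt m)]) ω) /
        ∑ j, Real.sqrt ((P[V j | F (Nat.sqrt m)]) ω)) := by
    intro m i
    exact (measurable_const.mul (hCondMeas _ i).sqrt).div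
      (Finset.measurable_sum _ (fun j _ => (hCondMeas _ j).sqrt))
  have hAllocMeas : ∀ (m : ℕ) i, Measurable (alloc m i) := by
    intro m i
    have hlt : ∀ i : Fin (n+1), (i:ℕ) < n → Measurable (alloc m i) := by
      intro i hi
      have : alloc m i = fun ω => max ((Nat.sqrt m : ℤ))
          ⌊(m : ℝ) * Real.sqrt ((P[V i | F (Nat.sqrt m)]) ω) /
            ∑ j, Real.sqrt ((P[V j | F (Nat.sqrt m)]) ω)⌋ :=
        funext fun ω => hAlloc m ω i hi
      rw [this]
      exact measurable_const.max (hRatioMeas m i).floor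
    by_cases hi : (i:ℕ) < n
    · exact hlt i hi
    · have hi' : i = Fin.last n := by
        have := i.isLt
        exact Fin.ext (by simp only [Fin.val_last]; omega)
      subst hi'
      have : alloc m (Fin.last n) = fun ω => (m : ℤ)
          - ∑ j ∈ Finset.univ.filter (fun i : Fin (n + 1) => (i : ℕ) < n), alloc m j ω :=
        funext fun ω => hAllocLast m ω
      rw [this]
      exact measurable_const.sub
        (Finset.measurable_sum _ (fun j hj => hlt j (Finset.mem_filter.1 hj).2))
  have hIntegrandMeas : ∀ m : ℕ, AEStronglyMeasurable
      (fun ω => (m : ℝ) * ∑ i, V i ω / ((alloc m i ω : ℝ) + r i)) P := by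
    intro m
    refine (measurable_const.mul (Finset.measurable_sum _ (fun i _ => ?_))).aestronglyMeasurable
    exact (hVm i).div ((measurable_from_top.comp (hAllocMeas m i)).add_const (r i))
  -- rewrite the goal as an integral of the scaled function
  simp_rw [← integral_const_mul]
  -- dominated convergence
  refine tendsto_integral_filter_of_dominated_convergence
    (bound := fun _ => ((n:ℝ)+1) * (2 / c0)) (Eventually.of_forall hIntegrandMeas) ?_
    (integrable_const _) ?_
  · -- uniform bound, eventually in m
    filter_upwards [tsfo_ev n c0 hc0] with m hm
    filter_upwards [hgood] with ω hω
    obtain ⟨h1, h2, _⟩ := hω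
    have hmc : 0 < (m:ℝ) * c0 := lt_of_lt_of_le (by positivity) hm
    -- lower bound on the allocations at ω
    have hρ := tsfo_rho n ε hε (fun i => (P[V i | F (Nat.sqrt m)]) ω) (fun i => h2 _ i)
    have hlow : ∀ i, (m:ℝ)*c0/2 ≤ ((alloc m i ω : ℤ) : ℝ) := by
      refine tsfo_alloc_lower n c0 hc0 m
        (fun i => Real.sqrt ((P[V i | F (Nat.sqrt m)]) ω) /
          ∑ j, Real.sqrt ((P[V j | F (Nat.sqrt m)]) ω))
        hρ.1 hρ.2 (fun i => alloc m i ω) (fun i hi => ?_) (hAllocLast m ω) hm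
      beta_reduce
      rw [hAlloc m ω i hi, mul_div_assoc]
    have hterm : ∀ i : Fin (n+1), V i ω / ((alloc m i ω : ℝ) + r i) ≤ 2/((m:ℝ)*c0) := by
      intro i
      have hd : (m:ℝ)*c0/2 ≤ (alloc m i ω : ℝ) + r i := le_trans (hlow i) (by linarith [hr i])
      calc V i ω / ((alloc m i ω : ℝ) + r i) ≤ 1 / ((m:ℝ)*c0/2) :=
            div_le_div₀ zero_le_one (h1 i).2 (by positivity) hd
        _ = 2/((m:ℝ)*c0) := one_div_div _ _
    have htermnn : ∀ i : Fin (n+1), 0 ≤ V i ω / ((alloc m i ω : ℝ) + r i) := by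
      intro i
      have hd : (0:ℝ) < (alloc m i ω : ℝ) + r i :=
        lt_of_lt_of_le (by positivity) (le_trans (hlow i) (by linarith [hr i]))
      exact div_nonneg (le_trans hε.le (h1 i).1) hd.le
    have hsumnn : 0 ≤ ∑ i, V i ω / ((alloc m i ω : ℝ) + r i) :=
      Finset.sum_nonneg (fun i _ => htermnn i)
    have hsum : ∑ i, V i ω / ((alloc m i ω : ℝ) + r i) ≤ ((n:ℝ)+1) * (2/((m:ℝ)*c0)) := by
      calc (∑ i, V i ω / ((alloc m i ω : ℝ) + r i))
          ≤ ∑ _i : Fin (n+1), 2/((m:ℝ)*c0) := Finset.sum_le_sum (fun i _ => hterm i)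
        _ = ((n:ℝ)+1) * (2/((m:ℝ)*c0)) := by
            rw [Finset.sum_const, Finset.card_univ, Fintype.card_fin, nsmul_eq_mul]
            push_cast
            ring
    have hm0 : (0:ℝ) < (m:ℝ) := by
      by_contra h
      push_neg at h
      have : (m:ℝ) * c0 ≤ 0 := mul_nonpos_of_nonpos_of_nonneg h hc0.le
      linarith
    rw [Real.norm_eq_abs, abs_of_nonneg (mul_nonneg hm0.le hsumnn)]
    calc (m:ℝ) * ∑ i, V i ω / ((alloc m i ω : ℝ) + r i)
        ≤ (m:ℝ) * (((n:ℝ)+1) * (2/((m:ℝ)*c0))) :=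
          mul_le_mul_of_nonneg_left hsum hm0.le
      _ = ((n:ℝ)+1) * (2 / c0) := by
          field_simp
  · -- a.e. pointwise convergence
    filter_upwards [hgood] with ω hω
    obtain ⟨h1, h2, h3⟩ := hω
    exact tsfo_pointwise n ε hε r hr (fun i => V i ω) h1
      (fun m i => (P[V i | F (Nat.sqrt m)]) ω) (fun m i => h2 _ i)
      (fun i => (h3 i).comp tsfo_sqrt_atTop)
      (fun m i => alloc m i ω) (fun m i hi => hAlloc m ω i hi) (fun m => hAllocLast m ω)
end
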